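/- Let F be a finite Galois extension of a field L with Galois group G = {γ₁, ..., γ_n} (so n = [F:L]). Elements x₁, ..., x_n of F form a basis of F as an L-vector space if and only if the determinant of the n×n matrix with (k,ℓ)-entry γ_ℓ⁻¹(x_k) is nonzero. -/

import Mathlib

/-- Let `F/L` be a finite Galois extension with Galois group `G = {γ₁, ..., γₙ}`.
Elements `x₁, ..., xₙ` of `F` form an `L`-basis of `F` if and only if
`det(γ_ℓ⁻¹(x_k))_{k,ℓ} ≠ 0`. -/
theorem basis_iff_det_ne_zero (L F : Type*) [Field L] [Field F] [Algebra L F]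
    [IsGalois L F] [FiniteDimensional L F] (n : ℕ)
    (γ : Fin n → (F ≃ₐ[L] F)) (hγ : Function.Bijective γ) (x : Fin n → F) :
    (LinearIndependent L x ∧ Submodule.span L (Set.range x) = ⊤) ↔
      Matrix.det (Matrix.of fun k ℓ : Fin n => (γ ℓ)⁻¹ (x k)) ≠ 0 := by
  classical
  set M : Matrix (Fin n) (Fin n) F := Matrix.of fun k ℓ : Fin n => (γ ℓ)⁻¹ (x k) with hM
  set T : Matrix (Fin n) (Fin n) L := Algebra.traceMatrix L x with hT
  -- key identity : T mapped to F equals M * Mᵀ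
  have key : T.map (algebraMap L F) = M * M.transpose := by
    ext k k'
    have h1 : ∑ σ : F ≃ₐ[L] F, σ⁻¹ (x k * x k') = ∑ σ : F ≃ₐ[L] F, σ (x k * x k') :=
      Fintype.sum_equiv (Equiv.inv (F ≃ₐ[L] F)) _ _ (fun σ => rfl)
    have h2 : ∑ ℓ : Fin n, (γ ℓ)⁻¹ (x k * x k') = ∑ σ : F ≃ₐ[L] F, σ⁻¹ (x k * x k') :=
      Fintype.sum_equiv (Equiv.ofBijective γ hγ) _ _ (fun ℓ => rfl)
    have hsum : ∑ σ : F ≃ₐ[L] F, σ (x k * x k') = ∑ ℓ : Fin n, (γ ℓ)⁻¹ (x k * x k') :=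
      (h1.symm.trans h2.symm).symm.symm
    simp only [Matrix.map_apply, Matrix.mul_apply, Matrix.transpose_apply, hT,
      Algebra.traceMatrix_apply, Algebra.traceForm_apply]
    rw [trace_eq_sum_automorphisms, hsum]
    simp [hM, map_mul]
  have hinj : Function.Injective (algebraMap L F) := (algebraMap L F).injective
  have hdet : M.det ≠ 0 ↔ T.det ≠ 0 := by
    constructor
    · intro h hc
      apply h
      have h2 : M.det * M.det = 0 := by
        have hk := congrArg Matrix.det key
        rw [Matrix.det_mul, Matrix.det_transpose] at hk
        rw [← hk, ← RingHom.mapMatrix_apply, ← RingHom.map_det, hc, map_zero]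
      rcases mul_eq_zero.mp h2 with h' | h' <;> exact h'
    · intro h hc
      apply h
      apply hinj
      rw [map_zero, RingHom.map_det, RingHom.mapMatrix_apply, key, Matrix.det_mul, hc, zero_mul]
  rw [hdet]
  have hcard : n = Module.finrank L F := by
    rw [← IsGalois.card_aut_eq_finrank L F, ← Fintype.card_fin n]
    exact (Fintype.card_of_bijective hγ).trans Nat.card_eq_fintype_card.symm
  constructor
  · rintro ⟨hli, hsp⟩
    let b : Module.Basis (Fin n) L F := Module.Basis.mk hli hsp.ge
    have hbx : T = LinearMap.BilinForm.toMatrix b (Algebra.traceForm L F) := by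
      ext k k'
      simp [hT, Algebra.traceMatrix_apply, LinearMap.BilinForm.toMatrix_apply, b, Module.Basis.mk_apply]
    rw [hbx]
    exact ((LinearMap.BilinForm.nondegenerate_iff_det_ne_zero b).mp
      (traceForm_nondegenerate L F))
  · intro h
    have hli : LinearIndependent L x := by
      rw [Fintype.linearIndependent_iff]
      intro c hc
      have hvm : Matrix.vecMul c T = 0 := by
        funext k'
        have : (∑ k, c k • x k) * x k' = 0 := by rw [hc, zero_mul]
        have h0 : Algebra.trace L F ((∑ k, c k • x k) * x k') = 0 := by rw [this, map_zero]
        calc (Matrix.vecMul c T) k' = ∑ k, c k * Algebra.trace L F (x k * x k') := by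
              simp [Matrix.vecMul, dotProduct, hT, Algebra.traceMatrix_apply]
          _ = Algebra.trace L F ((∑ k, c k • x k) * x k') := by
              rw [Finset.sum_mul, map_sum]
              congr 1; funext k
              rw [smul_mul_assoc, map_smul, smul_eq_mul]
          _ = 0 := h0
      have := Matrix.eq_zero_of_vecMul_eq_zero h hvm
      exact fun i => congrFun this i
    refine ⟨hli, hli.span_eq_top_of_card_eq_finrank' ?_⟩
    simpa using hcard
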